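/- Let x* ∈ ℝⁿ, b = Ax* + e, and let x_λ be the unique minimizer of x ↦ ‖Ax − b‖² + λ‖x‖_W², λ > 0, W symmetric positive definite. Then x_λ satisfies the variational equation λ(x_λ, u)_W + (Ax_λ, Au) = (b, Au) for all u ∈ ℝⁿ, and the error bound |||x_λ − x*|||_λ ≤ λ^{1/2}‖x*‖_W + sup_{v≠0} (e·Av)/|||v|||_λ holds, where |||v|||_λ² = λ‖v‖_W² + ‖Av‖². -/

import Mathlib

open Matrix

private lemma quad_key {a b c : ℝ} (h : ∀ t : ℝ, 0 ≤ a * (t*t) + 2*b*t + c) : b^2 ≤ a*c := by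
  have h2 := discrim_le_zero (a := a) (b := 2*b) (c := c) h
  unfold discrim at h2; nlinarith

private lemma lin_key {a c : ℝ} (h : ∀ t : ℝ, 0 ≤ a * (t*t) + 2*c*t) : c = 0 := by
  have h2 : ∀ t : ℝ, 0 ≤ a * (t*t) + 2*c*t + 0 := by intro t; simpa using h t
  have := quad_key h2
  nlinarith

private lemma wsymm {n : ℕ} {W : Matrix (Fin n) (Fin n) ℝ} (hW : Wᵀ = W) (x y : Fin n → ℝ) :
    x ⬝ᵥ W.mulVec y = y ⬝ᵥ W.mulVec x := by
  rw [dotProduct_mulVec, ← mulVec_transpose, hW, dotProduct_comm]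

private lemma posdef_symm {n : ℕ} {W : Matrix (Fin n) (Fin n) ℝ} (hW : W.PosDef) : Wᵀ = W := by
  have := hW.1
  simpa [Matrix.IsHermitian, Matrix.conjTranspose_eq_transpose_of_trivial] using this

private lemma wpsd {n : ℕ} {W : Matrix (Fin n) (Fin n) ℝ} (hW : W.PosDef) (v : Fin n → ℝ) :
    0 ≤ v ⬝ᵥ W.mulVec v := by
  rcases eq_or_ne v 0 with h | h
  · subst h; simp
  · have := hW.dotProduct_mulVec_pos h; exact le_of_lt (by simpa using this)

private lemma csW {n : ℕ} {W : Matrix (Fin n) (Fin n) ℝ} (hW : W.PosDef) (x y : Fin n → ℝ) :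
    (x ⬝ᵥ W.mulVec y)^2 ≤ (x ⬝ᵥ W.mulVec x) * (y ⬝ᵥ W.mulVec y) := by
  have key : ∀ t : ℝ, 0 ≤ (y ⬝ᵥ W.mulVec y) * (t*t) + 2*(x ⬝ᵥ W.mulVec y)*t + x ⬝ᵥ W.mulVec x := by
    intro t
    have h := wpsd hW (x + t • y)
    have e1 : (x + t • y) ⬝ᵥ W.mulVec (x + t • y)
        = (y ⬝ᵥ W.mulVec y) * (t*t) + 2*(x ⬝ᵥ W.mulVec y)*t + x ⬝ᵥ W.mulVec x := by
      rw [Matrix.mulVec_add, Matrix.mulVec_smul]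
      simp [dotProduct_add, add_dotProduct, dotProduct_smul, smul_dotProduct,
        wsymm (posdef_symm hW) y x, smul_eq_mul]
      ring
    linarith [e1 ▸ h]
  have := quad_key key
  nlinarith [this]

private lemma dot_self_nonneg {n : ℕ} (x : Fin n → ℝ) : 0 ≤ x ⬝ᵥ x :=
  Finset.sum_nonneg fun i _ => mul_self_nonneg (x i)

private lemma csdot {n : ℕ} (x y : Fin n → ℝ) : (x ⬝ᵥ y)^2 ≤ (x ⬝ᵥ x) * (y ⬝ᵥ y) := by
  have := csW (n := n) (W := 1) Matrix.PosDef.one x y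
  simpa using this

theorem stmt6 (n : ℕ) (A W : Matrix (Fin n) (Fin n) ℝ) (hW : W.PosDef)
    (xstar e b : Fin n → ℝ) (hb : b = A.mulVec xstar + e)
    (lam : ℝ) (hlam : 0 < lam) (xlam : Fin n → ℝ)
    (hmin : ∀ x : Fin n → ℝ,
      (A.mulVec xlam - b) ⬝ᵥ (A.mulVec xlam - b) + lam * (xlam ⬝ᵥ W.mulVec xlam) ≤
      (A.mulVec x - b) ⬝ᵥ (A.mulVec x - b) + lam * (x ⬝ᵥ W.mulVec x)) :
    (∀ u : Fin n → ℝ,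
        lam * (xlam ⬝ᵥ W.mulVec u) + A.mulVec xlam ⬝ᵥ A.mulVec u = b ⬝ᵥ A.mulVec u) ∧
    Real.sqrt (lam * ((xlam - xstar) ⬝ᵥ W.mulVec (xlam - xstar)) +
        (A.mulVec (xlam - xstar)) ⬝ᵥ (A.mulVec (xlam - xstar))) ≤
      Real.sqrt lam * Real.sqrt (xstar ⬝ᵥ W.mulVec xstar) +
      ⨆ v : {v : Fin n → ℝ // v ≠ 0},
        (e ⬝ᵥ A.mulVec v.1) /
          Real.sqrt (lam * (v.1 ⬝ᵥ W.mulVec v.1) + (A.mulVec v.1) ⬝ᵥ (A.mulVec v.1)) := by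
  have hWs := posdef_symm hW
  -- Part 1: variational equation
  have hvar : ∀ u : Fin n → ℝ,
      lam * (xlam ⬝ᵥ W.mulVec u) + A.mulVec xlam ⬝ᵥ A.mulVec u = b ⬝ᵥ A.mulVec u := by
    intro u
    set a : ℝ := A.mulVec u ⬝ᵥ A.mulVec u + lam * (u ⬝ᵥ W.mulVec u) with ha
    set c : ℝ := lam * (xlam ⬝ᵥ W.mulVec u) + A.mulVec xlam ⬝ᵥ A.mulVec u - b ⬝ᵥ A.mulVec u with hc
    have key : ∀ t : ℝ, 0 ≤ a * (t*t) + 2*c*t := by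
      intro t
      have h := hmin (xlam + t • u)
      have e1 : (A.mulVec (xlam + t • u) - b) ⬝ᵥ (A.mulVec (xlam + t • u) - b) +
            lam * ((xlam + t • u) ⬝ᵥ W.mulVec (xlam + t • u))
          = ((A.mulVec xlam - b) ⬝ᵥ (A.mulVec xlam - b) + lam * (xlam ⬝ᵥ W.mulVec xlam))
            + (a * (t*t) + 2*c*t) := by
        rw [ha, hc]
        simp only [Matrix.mulVec_add, Matrix.mulVec_smul, sub_dotProduct, dotProduct_sub,
          add_dotProduct, dotProduct_add,
          smul_dotProduct, dotProduct_smul, smul_eq_mul,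
          wsymm hWs u xlam, dotProduct_comm (A.mulVec xlam) (A.mulVec u),
          dotProduct_comm b (A.mulVec u)]
        ring
      linarith [e1 ▸ h]
    have := lin_key key
    rw [hc] at this; linarith
  refine ⟨hvar, ?_⟩
  -- abbreviations
  set d : Fin n → ℝ := xlam - xstar with hd
  have hNsq : ∀ v : Fin n → ℝ,
      0 ≤ lam * (v ⬝ᵥ W.mulVec v) + A.mulVec v ⬝ᵥ A.mulVec v := by
    intro v
    have := wpsd hW v
    have := dot_self_nonneg (A.mulVec v)
    nlinarith
  have hpos : ∀ v : Fin n → ℝ, v ≠ 0 →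
      0 < Real.sqrt (lam * (v ⬝ᵥ W.mulVec v) + A.mulVec v ⬝ᵥ A.mulVec v) := by
    intro v hv
    apply Real.sqrt_pos.mpr
    have h1 : 0 < v ⬝ᵥ W.mulVec v := by have := hW.dotProduct_mulVec_pos hv; simpa using this
    have := dot_self_nonneg (A.mulVec v)
    nlinarith
  -- energy identity
  have h1 : lam * (d ⬝ᵥ W.mulVec d) + A.mulVec d ⬝ᵥ A.mulVec d
      = e ⬝ᵥ A.mulVec d - lam * (xstar ⬝ᵥ W.mulVec d) := by
    have hv := hvar d
    have hb' : b ⬝ᵥ A.mulVec d = A.mulVec xstar ⬝ᵥ A.mulVec d + e ⬝ᵥ A.mulVec d := by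
      rw [hb]; simp [add_dotProduct]
    have hexp1 : d ⬝ᵥ W.mulVec d = xlam ⬝ᵥ W.mulVec d - xstar ⬝ᵥ W.mulVec d := by
      rw [hd]; simp [sub_dotProduct]
    have hexp2 : A.mulVec d ⬝ᵥ A.mulVec d
        = A.mulVec xlam ⬝ᵥ A.mulVec d - A.mulVec xstar ⬝ᵥ A.mulVec d := by
      rw [hd, Matrix.mulVec_sub]
      simp only [sub_dotProduct, dotProduct_sub]
      ring
    rw [hexp1, hexp2]; linarith
  -- boundedness of the sup
  set f : {v : Fin n → ℝ // v ≠ 0} → ℝ := fun v =>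
    (e ⬝ᵥ A.mulVec v.1) /
      Real.sqrt (lam * (v.1 ⬝ᵥ W.mulVec v.1) + (A.mulVec v.1) ⬝ᵥ (A.mulVec v.1)) with hf
  have hnum : ∀ v : Fin n → ℝ, e ⬝ᵥ A.mulVec v ≤
      Real.sqrt (e ⬝ᵥ e) *
        Real.sqrt (lam * (v ⬝ᵥ W.mulVec v) + A.mulVec v ⬝ᵥ A.mulVec v) := by
    intro v
    have h2 : e ⬝ᵥ A.mulVec v ≤ Real.sqrt (e ⬝ᵥ e) * Real.sqrt (A.mulVec v ⬝ᵥ A.mulVec v) := by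
      have hcs := csdot e (A.mulVec v)
      have : e ⬝ᵥ A.mulVec v ≤ Real.sqrt ((e ⬝ᵥ e) * (A.mulVec v ⬝ᵥ A.mulVec v)) := by
        calc e ⬝ᵥ A.mulVec v ≤ |e ⬝ᵥ A.mulVec v| := le_abs_self _
          _ = Real.sqrt ((e ⬝ᵥ A.mulVec v)^2) := (Real.sqrt_sq_eq_abs _).symm
          _ ≤ _ := Real.sqrt_le_sqrt hcs
      rwa [Real.sqrt_mul (dot_self_nonneg e)] at this
    have h3 : Real.sqrt (A.mulVec v ⬝ᵥ A.mulVec v) ≤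
        Real.sqrt (lam * (v ⬝ᵥ W.mulVec v) + A.mulVec v ⬝ᵥ A.mulVec v) := by
      apply Real.sqrt_le_sqrt
      have := wpsd hW v; nlinarith
    calc e ⬝ᵥ A.mulVec v ≤ _ := h2
      _ ≤ _ := mul_le_mul_of_nonneg_left h3 (Real.sqrt_nonneg _)
  have hbdd : BddAbove (Set.range f) := by
    refine ⟨Real.sqrt (e ⬝ᵥ e), ?_⟩
    rintro _ ⟨v, rfl⟩
    rw [hf]
    exact div_le_of_le_mul₀ (Real.sqrt_nonneg _) (Real.sqrt_nonneg _)
      (by have := hnum v.1; linarith [hnum v.1])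
  rcases eq_or_ne d 0 with hd0 | hd0
  · -- trivial case
    rw [hd0]
    have hS : 0 ≤ ⨆ v : {v : Fin n → ℝ // v ≠ 0}, f v := by
      rcases isEmpty_or_nonempty {v : Fin n → ℝ // v ≠ 0} with hI | hI
      · rw [Real.iSup_of_isEmpty]
      · obtain ⟨v⟩ := hI
        have hp := le_ciSup hbdd v
        have hn := le_ciSup hbdd ⟨-v.1, neg_ne_zero.mpr v.2⟩
        have hfn : f ⟨-v.1, neg_ne_zero.mpr v.2⟩ = - f v := by
          rw [hf]; simp [Matrix.mulVec_neg, dotProduct_neg, neg_dotProduct, neg_div]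
        rw [hfn] at hn
        linarith
    simp only [Matrix.mulVec_zero, dotProduct_zero, zero_dotProduct, mul_zero, add_zero,
      Real.sqrt_zero]
    have : 0 ≤ Real.sqrt lam * Real.sqrt (xstar ⬝ᵥ W.mulVec xstar) :=
      mul_nonneg (Real.sqrt_nonneg _) (Real.sqrt_nonneg _)
    exact add_nonneg this hS
  · -- main case
    have hNd := hpos d hd0
    set Nd := Real.sqrt (lam * (d ⬝ᵥ W.mulVec d) + A.mulVec d ⬝ᵥ A.mulVec d) with hNdd
    have hNdsq : Nd * Nd = lam * (d ⬝ᵥ W.mulVec d) + A.mulVec d ⬝ᵥ A.mulVec d :=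
      Real.mul_self_sqrt (hNsq d)
    -- sup bound at d
    have h2 : e ⬝ᵥ A.mulVec d ≤ (⨆ v : {v : Fin n → ℝ // v ≠ 0}, f v) * Nd := by
      have := le_ciSup hbdd ⟨d, hd0⟩
      rw [hf] at this
      have := (div_le_iff₀ hNd).mp this
      linarith
    -- W Cauchy-Schwarz bound
    have h3 : -(lam * (xstar ⬝ᵥ W.mulVec d)) ≤
        Real.sqrt lam * Real.sqrt (xstar ⬝ᵥ W.mulVec xstar) * Nd := by
      have hcs := csW hW xstar d
      have habs : |xstar ⬝ᵥ W.mulVec d| ≤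
          Real.sqrt (xstar ⬝ᵥ W.mulVec xstar) * Real.sqrt (d ⬝ᵥ W.mulVec d) := by
        have : |xstar ⬝ᵥ W.mulVec d| = Real.sqrt ((xstar ⬝ᵥ W.mulVec d)^2) :=
          (Real.sqrt_sq_eq_abs _).symm
        rw [this, ← Real.sqrt_mul (wpsd hW xstar)]
        exact Real.sqrt_le_sqrt hcs
      have hsd : Real.sqrt lam * Real.sqrt (d ⬝ᵥ W.mulVec d) ≤ Nd := by
        rw [← Real.sqrt_mul hlam.le]
        exact Real.sqrt_le_sqrt (by linarith [dot_self_nonneg (A.mulVec d)])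
      have hlam' : lam = Real.sqrt lam * Real.sqrt lam := (Real.mul_self_sqrt hlam.le).symm
      calc -(lam * (xstar ⬝ᵥ W.mulVec d)) ≤ lam * |xstar ⬝ᵥ W.mulVec d| := by
            rcases abs_cases (xstar ⬝ᵥ W.mulVec d) with ⟨h, _⟩ | ⟨h, _⟩ <;> nlinarith
        _ ≤ lam * (Real.sqrt (xstar ⬝ᵥ W.mulVec xstar) * Real.sqrt (d ⬝ᵥ W.mulVec d)) :=
            mul_le_mul_of_nonneg_left habs hlam.le
        _ = (Real.sqrt lam * Real.sqrt (xstar ⬝ᵥ W.mulVec xstar)) *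
              (Real.sqrt lam * Real.sqrt (d ⬝ᵥ W.mulVec d)) := by
            linear_combination (-(Real.sqrt (xstar ⬝ᵥ W.mulVec xstar) *
              Real.sqrt (d ⬝ᵥ W.mulVec d))) * Real.mul_self_sqrt hlam.le
        _ ≤ _ := mul_le_mul_of_nonneg_left hsd
              (mul_nonneg (Real.sqrt_nonneg _) (Real.sqrt_nonneg _))
    have hfinal : Nd * Nd ≤
        (Real.sqrt lam * Real.sqrt (xstar ⬝ᵥ W.mulVec xstar) +
          ⨆ v : {v : Fin n → ℝ // v ≠ 0}, f v) * Nd := by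
      rw [hNdsq, h1]; ring_nf; nlinarith [h2, h3]
    have := le_of_mul_le_mul_right hfinal hNd
    exact this
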